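/- Let n ≥ 2 and write z = (z₁, z₂, z̃) ∈ ℂ × ℂ × ℂ^{n−2}. Let γ be a continuous real-valued function on an open neighbourhood of the closure of a ball V = B(0, s) ⊂ ℂ^n with γ > 0 there, and set ρ(z) = Re(z₁z₂) + |z₁|² γ(z), M = { z ∈ V : ρ(z) = 0 }, V⁻ = { z ∈ V : ρ(z) < 0 }, Σ = { z ∈ V : z₁ = 0 and z₂ = 0 }, and M* = M \ Σ. Suppose F is holomorphic on V⁻, f : M → ℂ is continuous, and F extends continuously to V⁻ ∪ M* with boundary values f, i.e., there is a continuous function G on V⁻ ∪ M* with G = F on V⁻ and G = f on M*. Then there exists 0 < s′ ≤ s such that for every w ∈ Σ with ‖w‖ < s′, F(z) → f(w) as z → w with z ∈ V⁻ ∩ B(0, s′). -/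

import Mathlib

open Complex Metric Filter

noncomputable section

lemma eucl_coord_norm_le {n : ℕ} (z : EuclideanSpace ℂ (Fin n)) (i : Fin n) : ‖z i‖ ≤ ‖z‖ := by
  rw [EuclideanSpace.norm_eq]
  calc ‖z i‖ = Real.sqrt (‖z i‖ ^ 2) := (Real.sqrt_sq (norm_nonneg _)).symm
    _ ≤ _ := Real.sqrt_le_sqrt (Finset.single_le_sum (fun j _ => sq_nonneg ‖z j‖) (Finset.mem_univ i))

/-- The defining function `ρ(z) = Re(z₁ z₂) + |z₁|² γ(z)` on `ℂ^n` (`n = m + 2 ≥ 2`). -/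
def rhoGamma (m : ℕ) (γ : EuclideanSpace ℂ (Fin (m + 2)) → ℝ)
    (z : EuclideanSpace ℂ (Fin (m + 2))) : ℝ :=
  (z 0 * z 1).re + ‖z 0‖ ^ 2 * γ z

/-- The one-sided domain `V⁻ = {z ∈ B(0,s) : ρ(z) < 0}`. -/
def Vminus (m : ℕ) (γ : EuclideanSpace ℂ (Fin (m + 2)) → ℝ) (s : ℝ) :
    Set (EuclideanSpace ℂ (Fin (m + 2))) :=
  {z | z ∈ ball (0 : EuclideanSpace ℂ (Fin (m + 2))) s ∧ rhoGamma m γ z < 0}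

/-- The hypersurface `M = {z ∈ B(0,s) : ρ(z) = 0}`. -/
def Mset (m : ℕ) (γ : EuclideanSpace ℂ (Fin (m + 2)) → ℝ) (s : ℝ) :
    Set (EuclideanSpace ℂ (Fin (m + 2))) :=
  {z | z ∈ ball (0 : EuclideanSpace ℂ (Fin (m + 2))) s ∧ rhoGamma m γ z = 0}

/-- The singular set `Σ = {z ∈ B(0,s) : z₁ = 0, z₂ = 0}`. -/
def SigSet (m : ℕ) (s : ℝ) : Set (EuclideanSpace ℂ (Fin (m + 2))) :=
  {z | z ∈ ball (0 : EuclideanSpace ℂ (Fin (m + 2))) s ∧ z 0 = 0 ∧ z 1 = 0}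

/-- Boundary regularity of the one-sided extension at the codimension-3
singular set `Σ`: if `F` is holomorphic on `V⁻` and extends continuously to `V⁻ ∪ M*` with
boundary values `f`, then near the origin `F(z) → f(w)` as `z → w ∈ Σ` from `V⁻`. -/
theorem boundary_continuity_at_Sigma (m : ℕ) (s : ℝ) (hs : 0 < s)
    (W : Set (EuclideanSpace ℂ (Fin (m + 2)))) (hWo : IsOpen W)
    (hWc : closure (ball (0 : EuclideanSpace ℂ (Fin (m + 2))) s) ⊆ W)
    (γ : EuclideanSpace ℂ (Fin (m + 2)) → ℝ)
    (hγc : ContinuousOn γ W) (hγpos : ∀ z ∈ W, 0 < γ z)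
    (F f G : EuclideanSpace ℂ (Fin (m + 2)) → ℂ)
    (hF : DifferentiableOn ℂ F (Vminus m γ s))
    (hf : ContinuousOn f (Mset m γ s))
    (hG : ContinuousOn G (Vminus m γ s ∪ (Mset m γ s \ SigSet m s)))
    (hGF : ∀ z ∈ Vminus m γ s, G z = F z)
    (hGf : ∀ z ∈ Mset m γ s \ SigSet m s, G z = f z) :
    ∃ s' : ℝ, 0 < s' ∧ s' ≤ s ∧
      ∀ w ∈ SigSet m s, ‖w‖ < s' →
        Tendsto F (nhdsWithin w (Vminus m γ s ∩ ball 0 s')) (nhds (f w)) := by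
  classical
  -- the minimum of γ on the closed ball
  have hKc : IsCompact (closure (ball (0 : EuclideanSpace ℂ (Fin (m + 2))) s)) := by
    rw [closure_ball (0 : EuclideanSpace ℂ (Fin (m + 2))) hs.ne']
    exact isCompact_closedBall 0 s
  have hKne : (closure (ball (0 : EuclideanSpace ℂ (Fin (m + 2))) s)).Nonempty :=
    ⟨0, subset_closure (mem_ball_self hs)⟩
  obtain ⟨x₀, hx₀K, hx₀min⟩ := hKc.exists_isMinOn hKne (hγc.mono hWc)
  set c : ℝ := γ x₀ with hc_def
  have hc : 0 < c := hγpos x₀ (hWc hx₀K)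
  have hcball : ∀ ζ : EuclideanSpace ℂ (Fin (m + 2)), ζ ∈ ball (0 : EuclideanSpace ℂ (Fin (m + 2))) s → c ≤ γ ζ :=
    fun ζ hζ => hx₀min (subset_closure hζ)
  -- key estimate on V⁻ : ‖ζ 0‖ ≤ ‖ζ 1‖ / c
  have hkey : ∀ ζ : EuclideanSpace ℂ (Fin (m + 2)), ζ ∈ Vminus m γ s → ‖ζ 0‖ ≤ ‖ζ 1‖ / c := by
    intro ζ hζ
    obtain ⟨hζb, hζρ⟩ := hζ
    rw [rhoGamma] at hζρ
    have h2 : ‖ζ 0‖ ^ 2 * c ≤ ‖ζ 0‖ ^ 2 * γ ζ :=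
      mul_le_mul_of_nonneg_left (hcball ζ hζb) (sq_nonneg _)
    have h4 : -(ζ 0 * ζ 1).re ≤ ‖ζ 0‖ * ‖ζ 1‖ := by
      calc -(ζ 0 * ζ 1).re ≤ |(ζ 0 * ζ 1).re| := neg_le_abs _
        _ ≤ ‖ζ 0 * ζ 1‖ := Complex.abs_re_le_norm _
        _ = ‖ζ 0 * ζ 1‖ := rfl
        _ = ‖ζ 0‖ * ‖ζ 1‖ := norm_mul _ _
    have h1 : ‖ζ 0‖ ^ 2 * c ≤ ‖ζ 0‖ * ‖ζ 1‖ := by linarith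
    rcases eq_or_lt_of_le (norm_nonneg (ζ 0)) with h0 | h0
    · rw [← h0]; positivity
    · rw [le_div_iff₀ hc]
      nlinarith
  -- z 1 ≠ 0 on V⁻
  have hz1ne : ∀ ζ : EuclideanSpace ℂ (Fin (m + 2)), ζ ∈ Vminus m γ s → ζ 1 ≠ 0 := by
    intro ζ hζ h1
    obtain ⟨hζb, hζρ⟩ := hζ
    rw [rhoGamma, h1, mul_zero, Complex.zero_re] at hζρ
    have h2 : (0:ℝ) ≤ ‖ζ 0‖ ^ 2 * γ ζ :=
      mul_nonneg (sq_nonneg _) (le_trans hc.le (hcball ζ hζb))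
    linarith
  -- ρ is continuous on W
  have hρc : ContinuousOn (rhoGamma m γ) W := by
    have h0 : Continuous fun z : EuclideanSpace ℂ (Fin (m + 2)) => z 0 :=
      (EuclideanSpace.proj (0 : Fin (m + 2)) : EuclideanSpace ℂ (Fin (m + 2)) →L[ℂ] ℂ).continuous
    have h1 : Continuous fun z : EuclideanSpace ℂ (Fin (m + 2)) => z 1 :=
      (EuclideanSpace.proj (1 : Fin (m + 2)) : EuclideanSpace ℂ (Fin (m + 2)) →L[ℂ] ℂ).continuous
    exact ((Complex.continuous_re.comp (h0.mul h1)).continuousOn).add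
      (((h0.norm.pow 2).continuousOn).mul hγc)
  -- V⁻ is open
  have hVo : IsOpen (Vminus m γ s) := by
    have heq : Vminus m γ s = ball (0 : EuclideanSpace ℂ (Fin (m + 2))) s ∩ rhoGamma m γ ⁻¹' Set.Iio 0 := rfl
    rw [heq]
    exact (hρc.mono fun z hz => hWc (subset_closure hz)).isOpen_inter_preimage
      isOpen_ball isOpen_Iio
  -- G is differentiable on V⁻
  have hGd : DifferentiableOn ℂ G (Vminus m γ s) := hF.congr hGF
  -- choose s'
  set s' : ℝ := s * c / (2 * (c + 2)) with hs'_def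
  have hs' : 0 < s' := by positivity
  have hs'le : s' ≤ s := by
    rw [hs'_def, div_le_iff₀ (by positivity)]
    nlinarith
  have hs'bound : s' + 2 * (s' / c) = s / 2 := by
    rw [hs'_def]; field_simp
  refine ⟨s', hs', hs'le, ?_⟩
  intro w hwSig hws'
  obtain ⟨hwball, hw0, hw1⟩ := hwSig
  have hwM : w ∈ Mset m γ s := ⟨hwball, by simp [rhoGamma, hw0]⟩
  rw [Metric.tendsto_nhdsWithin_nhds]
  intro ε hε
  obtain ⟨δ₁, hδ₁, hδ₁f⟩ := Metric.continuousWithinAt_iff.mp (hf w hwM) (ε / 2) (by linarith)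
  refine ⟨δ₁ * c / (c + 2), by positivity, ?_⟩
  intro z hz hdzw
  obtain ⟨hzV, hzb⟩ := hz
  -- the affine slice map
  set b : EuclideanSpace ℂ (Fin (m + 2)) := EuclideanSpace.single (0 : Fin (m + 2)) (1 : ℂ) with hb_def
  set φ : ℂ → EuclideanSpace ℂ (Fin (m + 2)) := fun ζ => z + (ζ - z 0) • b with hφ_def
  have hφ0 : ∀ ζ, φ ζ 0 = ζ := by
    intro ζ; simp [hφ_def, hb_def, EuclideanSpace.single_apply]
  have hφ1 : ∀ ζ, φ ζ 1 = z 1 := by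
    intro ζ; simp [hφ_def, hb_def, EuclideanSpace.single_apply]
  have hφz : φ (z 0) = z := by simp [hφ_def]
  have hφdist : ∀ ζ, ‖φ ζ - z‖ = ‖ζ - z 0‖ := by
    intro ζ
    simp [hφ_def, hb_def, norm_smul, EuclideanSpace.norm_single]
  have hφcont : Continuous φ :=
    continuous_const.add ((continuous_id.sub continuous_const).smul continuous_const)
  have hφdiff : Differentiable ℂ φ :=
    (differentiable_const _).add ((differentiable_id.sub_const _).smul_const _)
  -- the slice
  set U : Set ℂ := φ ⁻¹' (Vminus m γ s) with hU_def
  have hUo : IsOpen U := hVo.preimage hφcont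
  have hz0U : z 0 ∈ U := by rw [hU_def, Set.mem_preimage, hφz]; exact hzV
  have hz1s' : ‖z 1‖ < s' := lt_of_le_of_lt (eucl_coord_norm_le z 1) (mem_ball_zero_iff.mp hzb)
  have hUsub : ∀ ζ ∈ U, ‖ζ‖ ≤ ‖z 1‖ / c := by
    intro ζ hζ
    have h := hkey (φ ζ) hζ
    rwa [hφ0, hφ1] at h
  have hUcl : ∀ ζ ∈ closure U, ‖ζ‖ ≤ ‖z 1‖ / c := by
    intro ζ hζ
    have hsub : closure U ⊆ closedBall (0 : ℂ) (‖z 1‖ / c) :=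
      closure_minimal (fun x hx => mem_closedBall_zero_iff.mpr (hUsub x hx)) Metric.isClosed_closedBall
    exact mem_closedBall_zero_iff.mp (hsub hζ)
  have hUb : Bornology.IsBounded U :=
    (isBounded_closedBall (x := (0:ℂ)) (r := ‖z 1‖ / c)).subset
      (fun x hx => mem_closedBall_zero_iff.mpr (hUsub x hx))
  -- points of closure U map into ball 0 s
  have hz0le : ‖z 0‖ ≤ ‖z 1‖ / c := hkey z hzV
  have hφball : ∀ ζ ∈ closure U, ‖φ ζ‖ ≤ s / 2 := by
    intro ζ hζ
    have h1 : ‖φ ζ‖ ≤ ‖z‖ + ‖ζ - z 0‖ := by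
      calc ‖φ ζ‖ = ‖z + (φ ζ - z)‖ := by rw [show z + (φ ζ - z) = φ ζ by abel]
        _ ≤ ‖z‖ + ‖φ ζ - z‖ := norm_add_le _ _
        _ = ‖z‖ + ‖ζ - z 0‖ := by rw [hφdist]
    have h2 : ‖ζ - z 0‖ ≤ ‖ζ‖ + ‖z 0‖ := norm_sub_le _ _
    have h3 := hUcl ζ hζ
    have h4 : ‖z 1‖ / c ≤ s' / c := by gcongr
    have h5 : ‖z‖ < s' := mem_ball_zero_iff.mp hzb
    calc ‖φ ζ‖ ≤ ‖z‖ + (‖ζ‖ + ‖z 0‖) := by linarith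
      _ ≤ s' + (s' / c + s' / c) := by linarith
      _ = s' + 2 * (s' / c) := by ring
      _ = s / 2 := hs'bound
  have hφballs : ∀ ζ ∈ closure U, φ ζ ∈ ball (0 : EuclideanSpace ℂ (Fin (m + 2))) s := by
    intro ζ hζ
    rw [mem_ball_zero_iff]
    exact lt_of_le_of_lt (hφball ζ hζ) (by linarith)
  -- frontier points map into M*
  have hfront : ∀ ζ ∈ frontier U, φ ζ ∈ Mset m γ s \ SigSet m s := by
    intro ζ hζ
    have hζcl : ζ ∈ closure U := frontier_subset_closure hζ
    have hζnU : ζ ∉ U := by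
      rw [hUo.frontier_eq] at hζ; exact hζ.2
    have hballζ : φ ζ ∈ ball (0 : EuclideanSpace ℂ (Fin (m + 2))) s := hφballs ζ hζcl
    have hρζ : rhoGamma m γ (φ ζ) ≤ 0 := by
      have hne : (nhdsWithin ζ U).NeBot := mem_closure_iff_nhdsWithin_neBot.mp hζcl
      have hcont : ContinuousWithinAt (fun x => rhoGamma m γ (φ x)) U ζ := by
        have hca : ContinuousAt (rhoGamma m γ) (φ ζ) :=
          hρc.continuousAt (hWo.mem_nhds (hWc (subset_closure hballζ)))
        exact (hca.comp hφcont.continuousAt).continuousWithinAt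
      refine le_of_tendsto hcont ?_
      filter_upwards [self_mem_nhdsWithin] with x hx
      exact (hx : φ x ∈ Vminus m γ s).2.le
    have hρζ0 : rhoGamma m γ (φ ζ) = 0 := by
      rcases lt_or_eq_of_le hρζ with h | h
      · exact absurd (show φ ζ ∈ Vminus m γ s from ⟨hballζ, h⟩) hζnU
      · exact h
    refine ⟨⟨hballζ, hρζ0⟩, ?_⟩
    intro hSig
    exact hz1ne z hzV (by rw [← hφ1 ζ]; exact hSig.2.2)
  -- closure U maps into the domain of G
  have hclmap : Set.MapsTo φ (closure U) (Vminus m γ s ∪ (Mset m γ s \ SigSet m s)) := by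
    intro ζ hζ
    by_cases h : ζ ∈ U
    · exact Set.mem_union_left _ h
    · exact Set.mem_union_right _ (hfront ζ ⟨hζ, by rwa [hUo.interior_eq]⟩)
  -- set up the maximum principle
  have hdc : DiffContOnCl ℂ (fun ζ => G (φ ζ) - f w) U := by
    constructor
    · have hcomp : DifferentiableOn ℂ (G ∘ φ) U :=
        hGd.comp hφdiff.differentiableOn (fun x hx => hx)
      exact hcomp.sub (differentiableOn_const _)
    · have hcomp : ContinuousOn (G ∘ φ) (closure U) :=
        hG.comp hφcont.continuousOn hclmap
      exact hcomp.sub continuousOn_const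
  -- frontier bound
  have hfb : ∀ ζ ∈ frontier U, ‖G (φ ζ) - f w‖ ≤ ε / 2 := by
    intro ζ hζ
    have hMζ := hfront ζ hζ
    have hζcl : ζ ∈ closure U := frontier_subset_closure hζ
    have hd : dist (φ ζ) w < δ₁ := by
      have h1 : ‖z 1‖ ≤ dist z w := by
        have hzw1 : (z - w) 1 = z 1 := by simp [hw1]
        calc ‖z 1‖ = ‖(z - w) 1‖ := by rw [hzw1]
          _ ≤ ‖z - w‖ := eucl_coord_norm_le _ _
          _ = dist z w := (dist_eq_norm z w).symm
      have h2 : ‖ζ‖ ≤ ‖z 1‖ / c := hUcl ζ hζcl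
      have h3 : dist (φ ζ) w ≤ dist z w + ‖ζ - z 0‖ := by
        calc dist (φ ζ) w ≤ dist (φ ζ) z + dist z w := dist_triangle _ _ _
          _ = ‖φ ζ - z‖ + dist z w := by rw [dist_eq_norm]
          _ = ‖ζ - z 0‖ + dist z w := by rw [hφdist]
          _ = dist z w + ‖ζ - z 0‖ := by ring
      have h4 : ‖ζ - z 0‖ ≤ ‖ζ‖ + ‖z 0‖ := norm_sub_le _ _
      have h6 : ‖z 1‖ / c ≤ dist z w / c := by gcongr
      have h5 : dist (φ ζ) w ≤ dist z w + 2 * (dist z w / c) := by linarith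
      have hd2 : dist z w * (c + 2) < δ₁ * c := (lt_div_iff₀ (by positivity)).mp hdzw
      have h7 : dist z w + 2 * (dist z w / c) < δ₁ := by
        rw [show dist z w + 2 * (dist z w / c) = dist z w * (c + 2) / c by field_simp,
          div_lt_iff₀ hc]
        linarith
      linarith
    have hfd := hδ₁f hMζ.1 hd
    rw [hGf (φ ζ) hMζ, ← dist_eq_norm]
    exact hfd.le
  -- apply the maximum principle
  have hmax : ‖G (φ (z 0)) - f w‖ ≤ ε / 2 :=
    Complex.norm_le_of_forall_mem_frontier_norm_le hUb hdc hfb (subset_closure hz0U)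
  rw [hφz, hGF z hzV] at hmax
  rw [dist_eq_norm]
  linarith
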